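/- Every nonempty string in S_q(n) that is a concatenation of blocks from B_{q,ℓ,r} decomposes uniquely as such a concatenation, and consequently the cardinality of C_{q,ℓ,r}(n) satisfies, for all n ≥ 1, the recurrence |C_{q,ℓ,r}(n)| = (q−1) · Σ over pairs (i,j) with 1 ≤ i ≤ ℓ, j ≥ 0 and L(i,j)+1 ≤ n of (1 + |C_{q,ℓ,r}(n − (L(i,j)+1))|), with the convention |C_{q,ℓ,r}(0)| = 0. -/

import Mathlib

namespace ZeroErrorDup

/-- Output relation of the (ℓ,r)-0-insertion channel acting on strings over the
alphabet A_q = {0,1,…,q−1} (encoded as lists of naturals): after each input symbol,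
`c` copies of the block `0^ℓ` are inserted, for some `c ∈ {0,1,…,r}`. -/
inductive IsOutput (ℓ r : ℕ) : List ℕ → List ℕ → Prop
  | nil : IsOutput ℓ r [] []
  | cons (a : ℕ) (c : ℕ) (hc : c ≤ r) {x y : List ℕ} :
      IsOutput ℓ r x y → IsOutput ℓ r (a :: x) (a :: (List.replicate (c * ℓ) 0 ++ y))

/-- Two strings are confusable if some string is an output of both. -/
def Confusable (ℓ r : ℕ) (x y : List ℕ) : Prop :=
  ∃ z, IsOutput ℓ r x z ∧ IsOutput ℓ r y z

/-- A set of strings is a zero-error code if every two distinct elements are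
non-confusable. -/
def ZeroErrorCode (ℓ r : ℕ) (C : Set (List ℕ)) : Prop :=
  ∀ x ∈ C, ∀ y ∈ C, x ≠ y → ¬ Confusable ℓ r x y

/-- `L ℓ r i j = ((r i + 1)(r ℓ + 1)^j − 1)/r − 1` (the division is exact). -/
def L (ℓ r i j : ℕ) : ℕ := ((r * i + 1) * (r * ℓ + 1) ^ j - 1) / r - 1

/-- The block `σ 0^u`: the symbol `σ` followed by a run of `u` zeros. -/
def block (σ u : ℕ) : List ℕ := σ :: List.replicate u 0

/-- `B q ℓ r`: the set of blocks `σ 0^{L(i,j)}` with `σ ∈ {1,…,q−1}`, `1 ≤ i ≤ ℓ`, `j ≥ 0`. -/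
def B (q ℓ r : ℕ) : Set (List ℕ) :=
  { b | ∃ σ i j : ℕ, 1 ≤ σ ∧ σ ≤ q - 1 ∧ 1 ≤ i ∧ i ≤ ℓ ∧ b = block σ (L ℓ r i j) }

/-- `S q n`: strings over `A_q` of length between 1 and `n` whose first symbol is nonzero. -/
def S (q n : ℕ) : Set (List ℕ) :=
  { x | x ≠ [] ∧ x.length ≤ n ∧ (∀ a ∈ x, a < q) ∧ x.headI ≠ 0 }

/-- `C q ℓ r n`: strings in `S q n` that are concatenations of blocks from `B q ℓ r`. -/
def C (q ℓ r n : ℕ) : Set (List ℕ) :=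
  { x | x ∈ S q n ∧ ∃ bs : List (List ℕ), (∀ b ∈ bs, b ∈ B q ℓ r) ∧ x = bs.flatten }

/-! ### Auxiliary material -/

/-- A list either empty or with a nonzero head. -/
def headNZ (t : List ℕ) : Prop := ∀ a l, t = a :: l → a ≠ 0

lemma rep_cancel : ∀ (u u' : ℕ) (t t' : List ℕ), headNZ t → headNZ t' →
    List.replicate u 0 ++ t = List.replicate u' 0 ++ t' → u = u' ∧ t = t' := by
  intro u
  induction u with
  | zero =>
    intro u' t t' ht ht' h
    cases u' with
    | zero => simpa using h
    | succ v =>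
      simp only [List.replicate_succ, List.nil_append, List.cons_append] at h
      exact absurd rfl (ht _ _ h)
  | succ v ih =>
    intro u' t t' ht ht' h
    cases u' with
    | zero =>
      simp only [List.replicate_succ, List.nil_append, List.cons_append] at h
      exact absurd rfl (ht' _ _ h.symm)
    | succ w =>
      simp only [List.replicate_succ, List.cons_append, List.cons.injEq, true_and] at h
      obtain ⟨h1, h2⟩ := ih w t t' ht ht' h
      exact ⟨by omega, h2⟩

lemma headNZ_flatten (q ℓ r : ℕ) (bs : List (List ℕ)) (h : ∀ b ∈ bs, b ∈ B q ℓ r) :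
    headNZ bs.flatten := by
  cases bs with
  | nil => intro a l hal; simp at hal
  | cons b rest =>
    obtain ⟨σ, i, j, hσ1, hσ2, hi1, hi2, hb⟩ := h b (by simp)
    intro a l hal
    rw [List.flatten_cons, hb, block, List.cons_append] at hal
    cases hal
    omega

lemma unique_decomp (q ℓ r : ℕ) : ∀ bs bs' : List (List ℕ),
    (∀ b ∈ bs, b ∈ B q ℓ r) → (∀ b ∈ bs', b ∈ B q ℓ r) →
    bs.flatten = bs'.flatten → bs = bs' := by
  intro bs
  induction bs with
  | nil =>
    intro bs' _ h' heq
    cases bs' with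
    | nil => rfl
    | cons b' rest' =>
      obtain ⟨σ, i, j, _, _, _, _, hb⟩ := h' b' (by simp)
      rw [List.flatten_cons, hb, block] at heq
      simp at heq
  | cons b rest ih =>
    intro bs' h h' heq
    cases bs' with
    | nil =>
      obtain ⟨σ, i, j, _, _, _, _, hb⟩ := h b (by simp)
      rw [List.flatten_cons, hb, block] at heq
      simp at heq
    | cons b' rest' =>
      obtain ⟨σ, i, j, hσ1, _, _, _, hb⟩ := h b (by simp)
      obtain ⟨σ', i', j', hσ1', _, _, _, hb'⟩ := h' b' (by simp)
      simp only [List.flatten_cons, hb, hb', block, List.cons_append, List.cons.injEq] at heq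
      obtain ⟨hσ, htail⟩ := heq
      obtain ⟨hu, ht⟩ := rep_cancel _ _ _ _
        (headNZ_flatten q ℓ r rest (fun x hx => h x (by simp [hx])))
        (headNZ_flatten q ℓ r rest' (fun x hx => h' x (by simp [hx]))) htail
      have : b = b' := by rw [hb, hb', block, block, hσ, hu]
      rw [this, ih rest' (fun x hx => h x (by simp [hx])) (fun x hx => h' x (by simp [hx])) ht]

lemma M_repr (ℓ r i : ℕ) (hi : 1 ≤ i) :
    ∀ j : ℕ, ∃ c : ℕ, 1 ≤ c ∧ (r * i + 1) * (r * ℓ + 1) ^ j = r * c + 1 := by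
  intro j
  induction j with
  | zero => exact ⟨i, hi, by ring⟩
  | succ j ih =>
    obtain ⟨c, hc, h⟩ := ih
    refine ⟨r * c * ℓ + c + ℓ, by omega, ?_⟩
    rw [pow_succ, ← mul_assoc, h]
    ring

lemma L_spec (ℓ r i j : ℕ) (hr : 1 ≤ r) (hi : 1 ≤ i) :
    r * (L ℓ r i j + 1) + 1 = (r * i + 1) * (r * ℓ + 1) ^ j := by
  obtain ⟨c, hc, h⟩ := M_repr ℓ r i hi j
  rw [L, h]
  have h1 : r * c + 1 - 1 = r * c := by omega
  rw [h1, Nat.mul_div_cancel_left c (by omega : 0 < r)]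
  have : c - 1 + 1 = c := by omega
  rw [this]

lemma pow_bern (r j : ℕ) : r * (j + 1) + 1 ≤ (r + 1) ^ (j + 1) := by
  induction j with
  | zero => simp
  | succ j ih =>
    have h2 : (r + 1) ^ (j + 1 + 1) = (r + 1) ^ (j + 1) * (r + 1) := by ring
    rw [h2]
    calc r * (j + 1 + 1) + 1 ≤ (r * (j + 1) + 1) * (r + 1) := by
          have hx : (r * (j + 1) + 1) * (r + 1) = r * (j + 1 + 1) + 1 + r * r * (j + 1) := by ring
          omega
    _ ≤ (r + 1) ^ (j + 1) * (r + 1) := Nat.mul_le_mul_right _ ih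

lemma L_ge (ℓ r i j : ℕ) (hr : 1 ≤ r) (hℓ : 1 ≤ ℓ) (hi : 1 ≤ i) :
    j + 1 ≤ L ℓ r i j + 1 := by
  have h := L_spec ℓ r i j hr hi
  have h1 : (r + 1) ^ (j + 1) ≤ (r * i + 1) * (r * ℓ + 1) ^ j := by
    have h2 : (r + 1) ^ j ≤ (r * ℓ + 1) ^ j :=
      Nat.pow_le_pow_left (by nlinarith) j
    calc (r + 1) ^ (j + 1) = (r + 1) * (r + 1) ^ j := by ring
    _ ≤ (r * i + 1) * (r * ℓ + 1) ^ j := Nat.mul_le_mul (by nlinarith) h2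
  have h3 := pow_bern r j
  have h4 : r * (j + 1) + 1 ≤ r * (L ℓ r i j + 1) + 1 := by omega
  have := Nat.le_of_mul_le_mul_left (by omega : r * (j+1) ≤ r * (L ℓ r i j + 1)) (by omega : 0 < r)
  omega

lemma L_inj_aux (ℓ r i j i' j' : ℕ) (hr : 1 ≤ r) (hi2 : i ≤ ℓ) (hi' : 1 ≤ i') (hjj : j ≤ j')
    (h : (r * i + 1) * (r * ℓ + 1) ^ j = (r * i' + 1) * (r * ℓ + 1) ^ j') :
    i = i' ∧ j = j' := by
  obtain ⟨d, rfl⟩ := Nat.exists_eq_add_of_le hjj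
  rw [pow_add, ← mul_assoc] at h
  have hK : 0 < (r * ℓ + 1) ^ j := Nat.pow_pos (by omega)
  have h2 : r * i + 1 = (r * i' + 1) * (r * ℓ + 1) ^ d := by
    have h' : (r * i + 1) * (r * ℓ + 1) ^ j
        = ((r * i' + 1) * (r * ℓ + 1) ^ d) * (r * ℓ + 1) ^ j := by rw [h]; ring
    exact Nat.eq_of_mul_eq_mul_right hK h'
  cases d with
  | zero =>
    simp only [pow_zero, mul_one] at h2
    have : r * i = r * i' := by omega
    exact ⟨Nat.eq_of_mul_eq_mul_left (by omega) this, by omega⟩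
  | succ d =>
    exfalso
    have h3 : (r * ℓ + 1) ^ (d + 1) ≥ r * ℓ + 1 :=
      Nat.le_self_pow (by omega) _
    have h4 : (r * i' + 1) * (r * ℓ + 1) ^ (d + 1) ≥ (r + 1) * (r * ℓ + 1) :=
      Nat.mul_le_mul (by have := Nat.le_mul_of_pos_right r (show 0 < i' by omega); omega) h3
    have h5 : r * i ≤ r * ℓ := Nat.mul_le_mul_left r hi2
    have h6 : (r + 1) * (r * ℓ + 1) = r * (r * ℓ) + r + r * ℓ + 1 := by ring
    have h7 : r * ℓ ≤ r * (r * ℓ) := Nat.le_mul_of_pos_left _ (by omega)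
    rw [h6] at h4
    omega

lemma L_inj (ℓ r i j i' j' : ℕ) (hr : 1 ≤ r) (hi : 1 ≤ i) (hi2 : i ≤ ℓ)
    (hi' : 1 ≤ i') (hi2' : i' ≤ ℓ) (h : L ℓ r i j = L ℓ r i' j') : i = i' ∧ j = j' := by
  have h1 := L_spec ℓ r i j hr hi
  have h2 := L_spec ℓ r i' j' hr hi'
  have hM : (r * i + 1) * (r * ℓ + 1) ^ j = (r * i' + 1) * (r * ℓ + 1) ^ j' := by
    rw [← h1, ← h2, h]
  rcases le_total j j' with hjj | hjj
  · exact L_inj_aux ℓ r i j i' j' hr hi2 hi' hjj hM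
  · obtain ⟨a, b⟩ := L_inj_aux ℓ r i' j' i j hr hi2' hi hjj hM.symm
    omega

lemma finite_bounded (q n : ℕ) : {l : List ℕ | l.length ≤ n ∧ ∀ a ∈ l, a < q}.Finite := by
  refine ((List.finite_length_le (Fin (q+1)) n).image (List.map Fin.val)).subset ?_
  rintro l ⟨hlen, hlt⟩
  refine ⟨l.attach.map (fun a => ⟨a.1, by have := hlt a.1 a.2; omega⟩), by simpa using hlen, ?_⟩
  simp [List.map_map]

lemma C_finite (q ℓ r n : ℕ) : (C q ℓ r n).Finite :=
  (finite_bounded q n).subset (fun x hx => ⟨hx.1.2.1, hx.1.2.2.1⟩)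

lemma headNZ_of_memC (q ℓ r m : ℕ) {t : List ℕ} (ht : t ∈ C q ℓ r m) : headNZ t := by
  intro a l hal
  have := ht.1.2.2.2
  rw [hal] at this
  simpa using this

lemma ncard_biUnion {ι α : Type*} (s : Finset ι) (f : ι → Set α)
    (hf : ∀ i ∈ s, (f i).Finite)
    (hd : ∀ i ∈ s, ∀ j ∈ s, i ≠ j → Disjoint (f i) (f j)) :
    (⋃ i ∈ s, f i).ncard = ∑ i ∈ s, (f i).ncard := by
  classical
  induction s using Finset.induction with
  | empty => simp
  | @insert a s ha ih =>
    rw [Finset.set_biUnion_insert, Finset.sum_insert ha,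
      Set.ncard_union_eq ?_ (hf a (by simp)) ?_,
      ih (fun i hi => hf i (by simp [hi])) (fun i hi j hj hij =>
        hd i (by simp [hi]) j (by simp [hj]) hij)]
    · rw [Set.disjoint_iUnion_right]
      intro i
      rw [Set.disjoint_iUnion_right]
      intro hi
      exact hd a (by simp) i (by simp [hi]) (by rintro rfl; exact ha hi)
    · exact Set.Finite.biUnion s.finite_toSet (fun i hi => hf i (Finset.mem_insert_of_mem hi))

lemma ncard_prod {α β : Type*} (s : Set α) (t : Set β) (hs : s.Finite) (ht : t.Finite) :
    (s ×ˢ t).ncard = s.ncard * t.ncard := by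
  rw [Set.ncard_eq_toFinset_card _ (hs.prod ht), ← Set.Finite.toFinset_prod hs ht,
    Finset.card_product, ← Set.ncard_eq_toFinset_card _ hs, ← Set.ncard_eq_toFinset_card _ ht]

lemma ncard_Icc_nat (a b : ℕ) : (Set.Icc a b).ncard = b + 1 - a := by
  rw [← Finset.coe_Icc, Set.ncard_coe_finset, Nat.card_Icc]

/-- The set of codewords whose first block has zero-run length `L ℓ r p.1 p.2`. -/
def Dset (q ℓ r n : ℕ) (p : ℕ × ℕ) : Set (List ℕ) :=
  (fun st : ℕ × List ℕ => block st.1 (L ℓ r p.1 p.2) ++ st.2) ''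
    ((Set.Icc 1 (q - 1)) ×ˢ (insert ([] : List ℕ) (C q ℓ r (n - (L ℓ r p.1 p.2 + 1)))))

lemma mem_Dset (q ℓ r n : ℕ) (p : ℕ × ℕ) (x : List ℕ) :
    x ∈ Dset q ℓ r n p ↔ ∃ σ t, 1 ≤ σ ∧ σ ≤ q - 1 ∧
      (t = [] ∨ t ∈ C q ℓ r (n - (L ℓ r p.1 p.2 + 1))) ∧
      x = block σ (L ℓ r p.1 p.2) ++ t := by
  constructor
  · rintro ⟨⟨σ, t⟩, ⟨hσ, ht⟩, rfl⟩
    exact ⟨σ, t, hσ.1, hσ.2, by simpa using ht, rfl⟩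
  · rintro ⟨σ, t, h1, h2, h3, rfl⟩
    exact ⟨(σ, t), ⟨⟨h1, h2⟩, by simpa using h3⟩, rfl⟩

lemma C_eq_biUnion (q ℓ r n : ℕ) (hq : 2 ≤ q) (hℓ : 1 ≤ ℓ) (hr : 1 ≤ r) (hn : 1 ≤ n) :
    C q ℓ r n = ⋃ p ∈ (Finset.Icc 1 ℓ ×ˢ Finset.range n).filter
        (fun p => L ℓ r p.1 p.2 + 1 ≤ n), Dset q ℓ r n p := by
  ext x
  simp only [Set.mem_iUnion, exists_prop]
  constructor
  · rintro ⟨⟨hne, hlen, hlt, hhead⟩, bs, hbs, rfl⟩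
    cases bs with
    | nil => simp at hne
    | cons b rest =>
      obtain ⟨σ, i, j, hσ1, hσ2, hi1, hi2, hb⟩ := hbs b (by simp)
      set u := L ℓ r i j with hu
      have hxlen : (b :: rest).flatten.length = (u + 1) + rest.flatten.length := by
        rw [List.flatten_cons, List.length_append, hb, block]
        simp
      have hun : u + 1 ≤ n := by omega
      have hjn : j < n := by
        have := L_ge ℓ r i j hr hℓ hi1
        omega
      refine ⟨(i, j), ?_, ?_⟩
      · simp only [Finset.mem_filter, Finset.mem_product, Finset.mem_Icc, Finset.mem_range]
        exact ⟨⟨⟨hi1, hi2⟩, hjn⟩, hun⟩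
      · rw [mem_Dset]
        refine ⟨σ, rest.flatten, hσ1, hσ2, ?_, by rw [List.flatten_cons, hb]⟩
        rcases eq_or_ne rest.flatten [] with hfe | hfe
        · exact Or.inl hfe
        · refine Or.inr ⟨⟨hfe, show rest.flatten.length ≤ n - (L ℓ r i j + 1) by omega, ?_, ?_⟩,
            rest, fun x hx => hbs x (by simp [hx]), rfl⟩
          · intro a ha
            exact hlt a (by rw [List.flatten_cons]; exact List.mem_append_right _ ha)
          · cases hfl : rest.flatten with
            | nil => exact absurd hfl hfe
            | cons a l =>
              have := headNZ_flatten q ℓ r rest (fun x hx => hbs x (by simp [hx])) a l hfl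
              simpa [hfl] using this
  · rintro ⟨p, hp, hx⟩
    simp only [Finset.mem_filter, Finset.mem_product, Finset.mem_Icc, Finset.mem_range] at hp
    obtain ⟨⟨⟨hp11, hp12⟩, hp2⟩, hpl⟩ := hp
    rw [mem_Dset] at hx
    obtain ⟨σ, t, hσ1, hσ2, ht, rfl⟩ := hx
    set u := L ℓ r p.1 p.2 with hu
    have hblen : (block σ u).length = u + 1 := by simp [block]
    have htfacts : t.length ≤ n - (u + 1) ∧ (∀ a ∈ t, a < q) ∧
        ∃ bst : List (List ℕ), (∀ b ∈ bst, b ∈ B q ℓ r) ∧ t = bst.flatten := by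
      rcases ht with rfl | htc
      · exact ⟨by simp, by simp, [], by simp, by simp⟩
      · exact ⟨htc.1.2.1, htc.1.2.2.1, htc.2⟩
    obtain ⟨htlen, htlt, bst, hbst, htb⟩ := htfacts
    refine ⟨⟨?_, ?_, ?_, ?_⟩, block σ u :: bst, ?_, by rw [List.flatten_cons, htb]⟩
    · simp [block]
    · rw [List.length_append, hblen]; omega
    · intro a ha
      rw [List.mem_append] at ha
      rcases ha with ha | ha
      · rw [block] at ha
        rcases List.mem_cons.mp ha with rfl | ha
        · omega
        · have := List.eq_of_mem_replicate ha
          omega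
      · exact htlt a ha
    · simp only [block, List.cons_append, List.headI]
      omega
    · intro b hb
      rcases List.mem_cons.mp hb with rfl | hb
      · exact ⟨σ, p.1, p.2, hσ1, hσ2, hp11, hp12, rfl⟩
      · exact hbst b hb

theorem stmt11 (q ℓ r : ℕ) (hq : 2 ≤ q) (hℓ : 1 ≤ ℓ) (hr : 1 ≤ r) :
    (∀ bs bs' : List (List ℕ), (∀ b ∈ bs, b ∈ B q ℓ r) → (∀ b ∈ bs', b ∈ B q ℓ r) →
      bs.flatten = bs'.flatten → bs = bs') ∧
    (∀ n : ℕ, 1 ≤ n →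
      (C q ℓ r n).ncard =
        (q - 1) * ∑ p ∈ (Finset.Icc 1 ℓ ×ˢ Finset.range n).filter
            (fun p => L ℓ r p.1 p.2 + 1 ≤ n),
          (1 + (C q ℓ r (n - (L ℓ r p.1 p.2 + 1))).ncard)) := by
  refine ⟨unique_decomp q ℓ r, ?_⟩
  intro n hn
  have hfinD : ∀ p : ℕ × ℕ, (Dset q ℓ r n p).Finite := fun p =>
    (((Set.finite_Icc 1 (q - 1))).prod ((C_finite q ℓ r _).insert [])).image _
  have hdisj : ∀ p ∈ (Finset.Icc 1 ℓ ×ˢ Finset.range n).filter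
      (fun p => L ℓ r p.1 p.2 + 1 ≤ n), ∀ p' ∈ (Finset.Icc 1 ℓ ×ˢ Finset.range n).filter
      (fun p => L ℓ r p.1 p.2 + 1 ≤ n), p ≠ p' →
      Disjoint (Dset q ℓ r n p) (Dset q ℓ r n p') := by
    intro p hp p' hp' hne
    simp only [Finset.mem_filter, Finset.mem_product, Finset.mem_Icc, Finset.mem_range] at hp hp'
    rw [Set.disjoint_left]
    intro x hx hx'
    rw [mem_Dset] at hx hx'
    obtain ⟨σ, t, hσ1, hσ2, ht, hxe⟩ := hx
    obtain ⟨σ', t', hσ1', hσ2', ht', hxe'⟩ := hx'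
    rw [hxe'] at hxe
    simp only [block, List.cons_append, List.cons.injEq] at hxe
    have hNZ : headNZ t := by
      rcases ht with rfl | htc
      · intro a l h; simp at h
      · exact headNZ_of_memC q ℓ r _ htc
    have hNZ' : headNZ t' := by
      rcases ht' with rfl | htc
      · intro a l h; simp at h
      · exact headNZ_of_memC q ℓ r _ htc
    obtain ⟨hLeq, -⟩ := rep_cancel _ _ _ _ hNZ' hNZ hxe.2
    obtain ⟨h1, h2⟩ := L_inj ℓ r p'.1 p'.2 p.1 p.2 hr hp'.1.1.1 hp'.1.1.2 hp.1.1.1 hp.1.1.2 hLeq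
    exact hne (Prod.ext h1.symm h2.symm)
  rw [C_eq_biUnion q ℓ r n hq hℓ hr hn,
    ncard_biUnion _ _ (fun p _ => hfinD p) hdisj, Finset.mul_sum]
  refine Finset.sum_congr rfl ?_
  intro p hp
  have hinj : Set.InjOn (fun st : ℕ × List ℕ => block st.1 (L ℓ r p.1 p.2) ++ st.2)
      ((Set.Icc 1 (q - 1)) ×ˢ (insert ([] : List ℕ) (C q ℓ r (n - (L ℓ r p.1 p.2 + 1))))) := by
    intro st _ st' _ h
    simp only [block, List.cons_append, List.cons.injEq] at h
    exact Prod.ext h.1 (List.append_cancel_left h.2)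
  rw [Dset, Set.ncard_image_of_injOn hinj,
    ncard_prod _ _ (Set.finite_Icc 1 (q - 1)) ((C_finite q ℓ r _).insert []),
    ncard_Icc_nat,
    Set.ncard_insert_of_notMem (fun h => h.1.1 rfl) (C_finite q ℓ r _)]
  have : q - 1 + 1 - 1 = q - 1 := by omega
  rw [this, Nat.add_comm]

end ZeroErrorDup
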